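/- Suppose Y_n = X_nβ + σZ_n with X_n of full column rank and fix Y_n. If Z_n is distributed as the standard n-dimensional Gaussian restricted (truncated) to the affine set {z : R(Y_n − σz) = 0} (where R = I − X(XᵀX)⁻¹Xᵀ), then β := (XᵀX)⁻¹Xᵀ(Y_n − σZ_n) has distribution N((XᵀX)⁻¹XᵀY_n, σ²(XᵀX)⁻¹). -/

import Mathlib

open Matrix MeasureTheory ProbabilityTheory
open scoped ENNReal NNReal Real
open Real

section Aux

lemma gaussianPDFReal_conv {v w : ℝ≥0} (hv : v ≠ 0) (hw : w ≠ 0) (y : ℝ) :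
    ∫ x, gaussianPDFReal 0 v x * gaussianPDFReal 0 w (y - x) = gaussianPDFReal 0 (v + w) y := by
  have hv' : (0:ℝ) < v := lt_of_le_of_ne v.coe_nonneg (by exact_mod_cast hv.symm)
  have hw' : (0:ℝ) < w := lt_of_le_of_ne w.coe_nonneg (by exact_mod_cast hw.symm)
  have hvw : (0:ℝ) < (v:ℝ) + w := by linarith
  set b : ℝ := ((v:ℝ) + w)/(2*v*w) with hb
  have hb' : (0:ℝ) < b := by positivity
  set c : ℝ := (v:ℝ)*y/((v:ℝ)+w) with hc
  set K : ℝ := (√(2*π*v))⁻¹ * (√(2*π*w))⁻¹ * rexp (-y^2/(2*((v:ℝ)+w))) with hK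
  have hexp : ∀ x : ℝ, gaussianPDFReal 0 v x * gaussianPDFReal 0 w (y - x)
      = K * rexp (-b * (x - c)^2) := by
    intro x
    have hAB : -x^2/(2*(v:ℝ)) + -(y-x)^2/(2*(w:ℝ))
        = -y^2/(2*((v:ℝ)+w)) + -b * (x - c)^2 := by
      rw [hb, hc]; field_simp; ring
    simp only [gaussianPDFReal, hK, sub_zero]
    rw [mul_mul_mul_comm, ← Real.exp_add, hAB, Real.exp_add]
    ring
  simp_rw [hexp]
  rw [integral_const_mul]
  have h2 : ∫ x : ℝ, rexp (-b * (x - c)^2) = ∫ x : ℝ, rexp (-b * x^2) :=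
    integral_sub_right_eq_self (fun x => rexp (-b * x^2)) c
  rw [h2, integral_gaussian]
  simp only [gaussianPDFReal, hK, sub_zero]
  have hsqrt : (√(2*π*(v:ℝ)))⁻¹ * (√(2*π*(w:ℝ)))⁻¹ * √(π/b) = (√(2*π*((v:ℝ)+(w:ℝ))))⁻¹ := by
    rw [← Real.sqrt_inv, ← Real.sqrt_inv, ← Real.sqrt_inv,
      ← Real.sqrt_mul (by positivity), ← Real.sqrt_mul (by positivity)]
    congr 1
    rw [hb]; field_simp
  push_cast
  calc (√(2*π*(v:ℝ)))⁻¹ * (√(2*π*(w:ℝ)))⁻¹ * rexp (-y^2/(2*((v:ℝ)+w))) * √(π/b)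
      = ((√(2*π*(v:ℝ)))⁻¹ * (√(2*π*(w:ℝ)))⁻¹ * √(π/b)) * rexp (-y^2/(2*((v:ℝ)+w))) := by ring
    _ = (√(2*π*((v:ℝ)+(w:ℝ))))⁻¹ * rexp (-y^2/(2*((v:ℝ)+w))) := by rw [hsqrt]

lemma gaussianReal_conv (v w : ℝ≥0) :
    Measure.map (fun q : ℝ × ℝ => q.1 + q.2) ((gaussianReal 0 v).prod (gaussianReal 0 w))
      = gaussianReal 0 (v + w) := by
  by_cases hv : v = 0
  · subst hv
    rw [gaussianReal_zero_var, Measure.dirac_prod, Measure.map_map (by fun_prop) (by fun_prop)]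
    simp only [Function.comp_def, zero_add]
    simp [Measure.map_id]
  by_cases hw : w = 0
  · subst hw
    rw [gaussianReal_zero_var, Measure.prod_dirac, Measure.map_map (by fun_prop) (by fun_prop)]
    simp only [Function.comp_def, add_zero]
    simp [Measure.map_id]
  ext s hs
  rw [Measure.map_apply (by fun_prop) hs, Measure.prod_apply (measurable_add hs)]
  have hmark : ∀ x : ℝ, (gaussianReal 0 w) (Prod.mk x ⁻¹' ((fun q : ℝ×ℝ => q.1+q.2) ⁻¹' s))
      = ∫⁻ y in s, gaussianPDF x w y := by
    intro x
    have : Prod.mk x ⁻¹' ((fun q : ℝ×ℝ => q.1+q.2) ⁻¹' s) = (x + ·) ⁻¹' s := rfl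
    rw [this, ← Measure.map_apply (by fun_prop) hs, gaussianReal_map_const_add,
      zero_add, gaussianReal_apply _ hw]
  simp_rw [hmark]
  have hjoint : Measurable (fun q : ℝ × ℝ => gaussianPDF q.1 w q.2) := by
    unfold gaussianPDF gaussianPDFReal
    fun_prop
  have hmeas : Measurable fun x => ∫⁻ y in s, gaussianPDF x w y :=
    Measurable.lintegral_prod_right hjoint
  rw [gaussianReal_of_var_ne_zero _ hv,
    lintegral_withDensity_eq_lintegral_mul _ (measurable_gaussianPDF _ _) hmeas]
  have hswap : ∫⁻ x, gaussianPDF 0 v x * ∫⁻ y in s, gaussianPDF x w y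
      = ∫⁻ y in s, ∫⁻ x, gaussianPDF 0 v x * gaussianPDF x w y := by
    calc ∫⁻ x, gaussianPDF 0 v x * ∫⁻ y in s, gaussianPDF x w y
        = ∫⁻ x, ∫⁻ y in s, gaussianPDF 0 v x * gaussianPDF x w y :=
          lintegral_congr fun x =>
            (lintegral_const_mul _ (hjoint.comp measurable_prodMk_left)).symm
      _ = ∫⁻ y in s, ∫⁻ x, gaussianPDF 0 v x * gaussianPDF x w y :=
          lintegral_lintegral_swap (((measurable_gaussianPDF 0 v).comp measurable_fst).mul
            hjoint).aemeasurable
  simp only [Pi.mul_apply]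
  rw [hswap]
  have hinner : ∀ y : ℝ, ∫⁻ x, gaussianPDF 0 v x * gaussianPDF x w y
      = gaussianPDF 0 (v + w) y := by
    intro y
    have heq : ∀ x : ℝ, gaussianPDF 0 v x * gaussianPDF x w y
        = ENNReal.ofReal (gaussianPDFReal 0 v x * gaussianPDFReal 0 w (y - x)) := by
      intro x
      rw [gaussianPDF, gaussianPDF, ← ENNReal.ofReal_mul (gaussianPDFReal_nonneg _ _ _)]
      congr 2
      rw [gaussianPDFReal_sub, zero_add]
    simp_rw [heq]
    have hint : Integrable (fun x => gaussianPDFReal 0 v x * gaussianPDFReal 0 w (y - x)) := by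
      have h1 : Integrable (fun x => gaussianPDFReal 0 w (y - x) * gaussianPDFReal 0 v x) := by
        refine Integrable.bdd_mul (integrable_gaussianPDFReal 0 v)
          (((measurable_gaussianPDFReal 0 w).comp (measurable_const.sub
            measurable_id)).aestronglyMeasurable) (c := (√(2*π*w))⁻¹) (ae_of_all _ fun x => ?_)
        rw [Real.norm_eq_abs, abs_of_nonneg (gaussianPDFReal_nonneg _ _ _), gaussianPDFReal]
        exact mul_le_of_le_one_right (by positivity) (Real.exp_le_one_iff.2 (by
          apply div_nonpos_of_nonpos_of_nonneg (neg_nonpos.2 (sq_nonneg _)) (by positivity)))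
      exact h1.congr (ae_of_all _ fun x => mul_comm _ _)
    rw [← ofReal_integral_eq_lintegral_ofReal hint
      (ae_of_all _ fun x => mul_nonneg (gaussianPDFReal_nonneg _ _ _)
        (gaussianPDFReal_nonneg _ _ _)),
      gaussianPDFReal_conv hv hw, gaussianPDF]
  simp_rw [hinner]
  rw [gaussianReal_apply _ (by simp [hv, hw] : v + w ≠ 0)]

lemma map_sum_pi_gaussian : ∀ (p : ℕ) (a : Fin p → ℝ),
    Measure.map (fun w : Fin p → ℝ => ∑ i, a i * w i)
        (Measure.pi fun _ : Fin p => gaussianReal 0 1)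
      = gaussianReal 0 (∑ i, (⟨a i ^ 2, sq_nonneg _⟩ : ℝ≥0)) := by
  intro p
  induction p with
  | zero =>
    intro a
    simp only [Finset.univ_eq_empty, Finset.sum_empty]
    rw [MeasureTheory.Measure.map_const]
    simp
    exact (gaussianReal_zero_var 0).symm
  | succ p ih =>
    intro a
    have hmp := (measurePreserving_piFinSuccAbove (fun _ : Fin (p+1) => gaussianReal 0 1) 0).symm
    rw [← hmp.map_eq, Measure.map_map (by fun_prop) hmp.measurable]
    have hfun : ((fun w : Fin (p+1) → ℝ => ∑ i, a i * w i)
          ∘ (MeasurableEquiv.piFinSuccAbove (fun _ : Fin (p+1) => ℝ) 0).symm)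
        = (fun q : ℝ × ℝ => q.1 + q.2)
          ∘ (Prod.map (fun x : ℝ => a 0 * x) (fun y : Fin p → ℝ => ∑ j, a j.succ * y j)) := by
      ext q
      simp [MeasurableEquiv.piFinSuccAbove, Fin.insertNthEquiv, Fin.sum_univ_succ,
        Fin.insertNth_zero]
    rw [hfun, ← Measure.map_map measurable_add ((measurable_id'.const_mul _).prodMap
      (by fun_prop)), ← Measure.map_prod_map _ _ (measurable_id'.const_mul _) (by fun_prop),
      gaussianReal_map_const_mul, ih, mul_zero, mul_one, gaussianReal_conv]
    congr 1
    exact (Fin.sum_univ_succ (M := ℝ≥0) (fun i => (⟨a i ^ 2, sq_nonneg _⟩ : ℝ≥0))).symm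

end Aux

theorem truncated_gaussian_pushforward_beta (n p : ℕ)
    (X : Matrix (Fin n) (Fin p) ℝ) (Y : Fin n → ℝ)
    (hX : IsUnit (Xᵀ * X).det) (σ : ℝ) (hσ : 0 < σ)
    (V : Matrix (Fin n) (Fin p) ℝ) (horth : Vᵀ * V = 1)
    (B C : Matrix (Fin p) (Fin p) ℝ) (hVX : V = X * B) (hXV : X = V * C) :
    let z₀ : Fin n → ℝ := σ⁻¹ • Y
    -- law of the truncated standard Gaussian on the affine set {z₀ + V u},
    -- expressed in the orthonormal coordinates u as N(-Vᵀz₀, I_p):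
    let νu : Measure (Fin p → ℝ) :=
      Measure.map (fun w => (fun i => -(Vᵀ.mulVec z₀) i + w i))
        (Measure.pi fun _ : Fin p => gaussianReal 0 1)
    let μZ : Measure (Fin n → ℝ) := Measure.map (fun u => z₀ + V.mulVec u) νu
    let b : (Fin n → ℝ) → Fin p → ℝ :=
      fun z => (Xᵀ * X)⁻¹.mulVec (Xᵀ.mulVec (Y - σ • z))
    let m : Fin p → ℝ := (Xᵀ * X)⁻¹.mulVec (Xᵀ.mulVec Y)
    let Cov : Matrix (Fin p) (Fin p) ℝ := σ ^ 2 • (Xᵀ * X)⁻¹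
    ∀ ℓ : Fin p → ℝ,
      Measure.map (fun z => ∑ i, ℓ i * b z i) μZ =
        gaussianReal (∑ i, ℓ i * m i) (Real.toNNReal (ℓ ⬝ᵥ Cov.mulVec ℓ)) := by
  intro z₀ νu μZ b m Cov ℓ
  simp only [μZ, νu, b, m, Cov]
  set M : Matrix (Fin p) (Fin p) ℝ := (Xᵀ * X)⁻¹ with hM
  set N : Matrix (Fin p) (Fin p) ℝ := M * Xᵀ * V with hN
  set L : Fin p → ℝ := ℓ ᵥ* N with hL
  set a : Fin p → ℝ := fun i => -σ * L i with ha
  have hg : Measurable (fun w : Fin p → ℝ => (fun i => -(Vᵀ.mulVec z₀) i + w i)) :=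
    measurable_pi_lambda _ fun i => (measurable_pi_apply i).const_add _
  have hf : Measurable (fun u : Fin p → ℝ => z₀ + V.mulVec u) := by
    refine measurable_pi_lambda _ fun i => ?_
    simp only [Pi.add_apply, Matrix.mulVec, dotProduct]
    exact measurable_const.add (Finset.measurable_sum _ fun j _ =>
      (measurable_const.mul (measurable_pi_apply j)))
  have hlb : Measurable (fun z : Fin n → ℝ => ∑ i, ℓ i * M.mulVec (Xᵀ.mulVec (Y - σ • z)) i) := by
    refine Finset.measurable_sum _ fun i _ => Measurable.const_mul ?_ _
    simp only [Matrix.mulVec, dotProduct, Pi.sub_apply, Pi.smul_apply, smul_eq_mul]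
    refine Finset.measurable_sum _ fun j _ => Measurable.const_mul ?_ _
    exact Finset.measurable_sum _ fun k _ =>
      (measurable_const.sub ((measurable_pi_apply k).const_mul _)).const_mul _
  rw [Measure.map_map hf hg, Measure.map_map hlb (hf.comp hg)]
  -- matrix identities
  have hXt : Xᵀ = Cᵀ * Vᵀ := by rw [hXV, transpose_mul]
  have hXVVt : Xᵀ * V * Vᵀ = Xᵀ := by
    rw [hXt, Matrix.mul_assoc Cᵀ Vᵀ V, horth, Matrix.mul_one]
  have hMsymm : Mᵀ = M := by
    rw [hM, transpose_nonsing_inv, transpose_mul, transpose_transpose]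
  have hinv : M * (Xᵀ * X) = 1 := by rw [hM]; exact nonsing_inv_mul _ hX
  have hNNt : N * Nᵀ = M := by
    have h1 : Nᵀ = Vᵀ * (X * Mᵀ) := by
      rw [hN, transpose_mul, transpose_mul, transpose_transpose]
    rw [hN, h1, Matrix.mul_assoc (M * Xᵀ) V (Vᵀ * (X * Mᵀ)),
      ← Matrix.mul_assoc V Vᵀ (X * Mᵀ), ← Matrix.mul_assoc (V * Vᵀ) X Mᵀ,
      ← Matrix.mul_assoc (M * Xᵀ) (V * Vᵀ * X) Mᵀ, ← Matrix.mul_assoc (M * Xᵀ) (V * Vᵀ) X,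
      Matrix.mul_assoc M Xᵀ (V * Vᵀ), ← Matrix.mul_assoc Xᵀ V Vᵀ, hXVVt,
      Matrix.mul_assoc M Xᵀ X, hinv, Matrix.one_mul, hMsymm]
  have hz0 : σ • z₀ = Y := by
    show σ • σ⁻¹ • Y = Y
    rw [smul_smul, mul_inv_cancel₀ hσ.ne', one_smul]
  -- constant term
  have hNVt : N * Vᵀ = M * Xᵀ := by
    rw [hN, Matrix.mul_assoc M Xᵀ V, Matrix.mul_assoc M (Xᵀ * V) Vᵀ, hXVVt]
  have hconst : ∑ x : Fin p, ℓ x * (M *ᵥ Xᵀ *ᵥ Y) x = σ * (L ⬝ᵥ Vᵀ.mulVec z₀) := by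
    rw [hL, ← dotProduct_mulVec, ← smul_eq_mul, ← dotProduct_smul, ← mulVec_smul,
      ← mulVec_smul, hz0, mulVec_mulVec, mulVec_mulVec, hNVt]
    rfl
  -- the composite function
  have hcomp : ((fun z : Fin n → ℝ => ∑ i : Fin p, ℓ i * (M *ᵥ Xᵀ *ᵥ (Y - σ • z)) i) ∘
        (fun u : Fin p → ℝ => z₀ + V *ᵥ u) ∘ fun (w : Fin p → ℝ) i => -(Vᵀ *ᵥ z₀) i + w i)
      = fun w : Fin p → ℝ => (∑ x : Fin p, ℓ x * (M *ᵥ Xᵀ *ᵥ Y) x) + ∑ i, a i * w i := by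
    funext w
    show ∑ i : Fin p, ℓ i * (M *ᵥ Xᵀ *ᵥ (Y - σ • (z₀ + V *ᵥ (-(Vᵀ *ᵥ z₀) + w)))) i
        = (∑ x : Fin p, ℓ x * (M *ᵥ Xᵀ *ᵥ Y) x) + ∑ i, a i * w i
    have hbz : ∀ u : Fin p → ℝ,
        ∑ i : Fin p, ℓ i * (M *ᵥ Xᵀ *ᵥ (Y - σ • (z₀ + V *ᵥ u))) i = -σ * (L ⬝ᵥ u) := by
      intro u
      have h2 : Y - σ • (z₀ + V.mulVec u) = (-σ) • V.mulVec u := by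
        rw [smul_add, hz0]
        module
      show ℓ ⬝ᵥ M *ᵥ Xᵀ *ᵥ (Y - σ • (z₀ + V *ᵥ u)) = -σ * (L ⬝ᵥ u)
      rw [h2, mulVec_smul, mulVec_smul, dotProduct_smul, mulVec_mulVec, mulVec_mulVec,
        dotProduct_mulVec, smul_eq_mul, ← hN, ← hL]
    rw [hbz, dotProduct_add, dotProduct_neg, hconst]
    have hsw : ∑ i, a i * w i = -σ * (L ⬝ᵥ w) := by
      rw [ha]
      show ∑ i, -σ * L i * w i = -σ * (L ⬝ᵥ w)
      rw [dotProduct, Finset.mul_sum]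
      exact Finset.sum_congr rfl fun i _ => by ring
    rw [hsw]
    ring
  rw [hcomp]
  have hsplit : (fun w : Fin p → ℝ => (∑ x : Fin p, ℓ x * (M *ᵥ Xᵀ *ᵥ Y) x) + ∑ i, a i * w i)
      = (fun t : ℝ => (∑ x : Fin p, ℓ x * (M *ᵥ Xᵀ *ᵥ Y) x) + t)
        ∘ fun w : Fin p → ℝ => ∑ i, a i * w i := rfl
  have hsum : Measurable (fun w : Fin p → ℝ => ∑ i, a i * w i) :=
    Finset.measurable_sum _ fun i _ => (measurable_pi_apply i).const_mul _
  rw [hsplit, ← Measure.map_map (measurable_const_add _) hsum, map_sum_pi_gaussian,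
    gaussianReal_map_const_add, zero_add]
  -- variance identification
  congr 1
  have hvar : ℓ ⬝ᵥ (σ ^ 2 • M) *ᵥ ℓ = ∑ i, a i ^ 2 := by
    have h3 : ℓ ⬝ᵥ M *ᵥ ℓ = L ⬝ᵥ L := by
      conv_lhs => rw [← hNNt, ← mulVec_mulVec, dotProduct_mulVec, ← hL, mulVec_transpose, ← hL]
    rw [smul_mulVec, dotProduct_smul, smul_eq_mul, h3, dotProduct,
      Finset.mul_sum]
    exact Finset.sum_congr rfl fun i _ => by rw [ha]; ring
  rw [hvar]
  refine NNReal.coe_injective ?_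
  rw [Real.coe_toNNReal _ (Finset.sum_nonneg fun i _ => sq_nonneg _)]
  push_cast
  exact NNReal.coe_sum _ _
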